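/- arXiv:chao-dyn/9610019 — 2 statements merged into one kernel-verified Lean document; each statement's English description precedes it below -/
import Mathlib

section
/- Let μ be a finite positive Borel measure on 𝕋, Δ an open interval, 0 ≤ β ≤ 1, and G_n(λ) := ∫ K_{n-1}(λ - x) dμ(x) with K the Fejér kernel. If there is a constant C such that limsup_{n→∞} n^{-β} G_n(λ) ≤ C uniformly in λ ∈ Δ, then μ is uniformly (1-β)-Hölder continuous in Δ, i.e., there is a constant C' such that μ(I) ≤ C'|I|^{1-β} for every interval I ⊂ Δ with |I| < 1. -/
open MeasureTheory Filter
open scoped Real Topology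

open Classical in
/-- The Fejér kernel `K_{n-1}(y) = (1/n) (sin(nπy)/sin(πy))²` on the circle,
with value `n` at integer points (the continuous extension). -/
noncomputable def fejer (n : ℕ) (y : ℝ) : ℝ :=
  if ∃ m : ℤ, y = (m : ℝ) then (n : ℝ)
  else (1 / (n : ℝ)) * (Real.sin (n * π * y) / Real.sin (π * y)) ^ 2

lemma abs_sin_nat_mul_le (n : ℕ) (t : ℝ) : |Real.sin (n * t)| ≤ n * |Real.sin t| := by
  induction n with
  | zero => simp
  | succ k ih =>
    have e : ((k:ℝ)+1) * t = k*t + t := by ring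
    push_cast
    rw [e, Real.sin_add]
    calc |Real.sin (k*t) * Real.cos t + Real.cos (k*t) * Real.sin t|
        ≤ |Real.sin (k*t) * Real.cos t| + |Real.cos (k*t) * Real.sin t| := abs_add_le _ _
      _ ≤ |Real.sin (k*t)| * 1 + 1 * |Real.sin t| := by
          rw [abs_mul, abs_mul]
          gcongr
          · exact Real.abs_cos_le_one _
          · exact Real.abs_cos_le_one _
      _ ≤ (k:ℝ) * |Real.sin t| + 1 * |Real.sin t| := by
          rw [mul_one]; gcongr
      _ = ((k:ℝ)+1) * |Real.sin t| := by ring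

lemma fejer_nonneg (n : ℕ) (y : ℝ) : 0 ≤ fejer n y := by
  unfold fejer; split
  · positivity
  · positivity

lemma fejer_le (n : ℕ) (y : ℝ) : fejer n y ≤ n := by
  unfold fejer; split
  · exact le_refl _
  · rcases Nat.eq_zero_or_pos n with rfl | hn
    · simp
    have hb : |Real.sin (n * π * y)| ≤ n * |Real.sin (π * y)| := by
      have := abs_sin_nat_mul_le n (π * y)
      rwa [← mul_assoc] at this
    have h2 : (Real.sin (n * π * y))^2 ≤ (n:ℝ)^2 * (Real.sin (π * y))^2 := by
      nlinarith [mul_self_le_mul_self (abs_nonneg (Real.sin (n * π * y))) hb,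
        sq_abs (Real.sin (n * π * y)), sq_abs (Real.sin (π * y))]
    have hs : Real.sin (π * y) ≠ 0 := by
      intro h0
      rcases Real.sin_eq_zero_iff.mp h0 with ⟨m, hm⟩
      refine ‹¬∃ m : ℤ, y = (m:ℝ)› ⟨m, ?_⟩
      have hπ : (π:ℝ) ≠ 0 := Real.pi_ne_zero
      have : π * (m:ℝ) = π * y := by linarith [hm]
      exact (mul_left_cancel₀ hπ this).symm
    have hs2 : 0 < (Real.sin (π * y))^2 := by positivity
    rw [div_pow, one_div, inv_mul_eq_div, div_le_iff₀ (by positivity), div_le_iff₀ hs2]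
    calc (Real.sin (n * π * y))^2 ≤ (n:ℝ)^2 * (Real.sin (π * y))^2 := h2
      _ = (n:ℝ) * (n:ℝ) * (Real.sin (π*y))^2 := by ring
      _ = ↑n * ↑n * Real.sin (π * y) ^ 2 := rfl

lemma fejer_measurable (n : ℕ) : Measurable (fejer n) := by
  unfold fejer
  apply Measurable.ite
  · have : {y : ℝ | ∃ m : ℤ, y = (m:ℝ)} = Set.range ((↑) : ℤ → ℝ) := by
      ext y; simp [eq_comm]
    rw [this]
    exact (Set.countable_range _).measurableSet
  · exact measurable_const
  · exact (measurable_const.mul (((Real.measurable_sin.comp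
      (measurable_const.mul measurable_id)).div
      (Real.measurable_sin.comp (measurable_const.mul measurable_id))).pow_const 2))

lemma fejer_lower {n : ℕ} (hn : 1 ≤ n) {y : ℝ} (hy : |y| ≤ 1/(2*n)) :
    4*n/π^2 ≤ fejer n y := by
  have hπ : (0:ℝ) < π := Real.pi_pos
  have hn' : (1:ℝ) ≤ n := by exact_mod_cast hn
  unfold fejer; split
  · have h1 : 4*(n:ℝ)/π^2 ≤ n := by
      rw [div_le_iff₀ (by positivity)]
      nlinarith [Real.pi_gt_three, sq_nonneg (π - 3), hn']
    exact h1
  · rename_i hne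
    have hy0 : y ≠ 0 := fun h => hne ⟨0, by exact_mod_cast h⟩
    set z := |y| with hz
    have hz0 : 0 < z := abs_pos.mpr hy0
    have hzle : z ≤ 1/(2*n) := hy
    have hsin_eq : (Real.sin (n * π * y))^2 = (Real.sin (n * π * z))^2 := by
      rcases abs_cases y with ⟨h1, _⟩ | ⟨h1, _⟩
      · rw [hz, h1]
      · rw [hz, h1]; rw [mul_neg, Real.sin_neg, neg_sq]
    have hsin_eq2 : (Real.sin (π * y))^2 = (Real.sin (π * z))^2 := by
      rcases abs_cases y with ⟨h1, _⟩ | ⟨h1, _⟩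
      · rw [hz, h1]
      · rw [hz, h1]; rw [mul_neg, Real.sin_neg, neg_sq]
    have harg : n * π * z ≤ π/2 := by
      calc (n:ℝ) * π * z ≤ n * π * (1/(2*n)) := by gcongr
        _ = π/2 := by field_simp
    have hlow : 2 * n * z ≤ Real.sin (n * π * z) := by
      have := Real.mul_le_sin (x := n * π * z) (by positivity) harg
      calc 2 * (n:ℝ) * z = 2/π * (n * π * z) := by field_simp
        _ ≤ Real.sin (n * π * z) := this
    have hup : Real.sin (π * z) ≤ π * z := Real.sin_le (by positivity)
    have hposup : 0 < Real.sin (π * z) := by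
      apply Real.sin_pos_of_pos_of_lt_pi (by positivity)
      have hhalf : z ≤ 1/2 := le_trans hzle
        (by rw [div_le_div_iff₀ (by positivity) (by norm_num)]; linarith)
      nlinarith [hπ, hhalf]
    have key : 4*(n:ℝ)^2/π^2 ≤ (Real.sin (n * π * y))^2 / (Real.sin (π * y))^2 := by
      rw [hsin_eq, hsin_eq2]
      have h1 : (2*(n:ℝ)*z)^2 ≤ (Real.sin (n*π*z))^2 := by
        apply sq_le_sq' <;> nlinarith
      have h2 : (Real.sin (π*z))^2 ≤ (π*z)^2 := by
        apply sq_le_sq' <;> nlinarith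
      calc 4*(n:ℝ)^2/π^2 = (2*n*z)^2/(π*z)^2 := by
            field_simp; ring
        _ ≤ (Real.sin (n*π*z))^2 / (Real.sin (π*z))^2 :=
            div_le_div₀ (by positivity) h1 (by positivity) h2
    have hn0 : (n:ℝ) ≠ 0 := by positivity
    have h1n : (0:ℝ) ≤ 1/n := by positivity
    rw [div_pow]
    calc 4*(n:ℝ)/π^2 = (1/n) * (4*(n:ℝ)^2/π^2) := by field_simp
      _ ≤ (1/n) * ((Real.sin (n * π * y))^2 / (Real.sin (π * y))^2) :=
          mul_le_mul_of_nonneg_left key h1n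

/-- If `n^{-β} G_n(λ)` is bounded above by `C` (in the limsup sense) uniformly in
`λ ∈ Δ = (a,b)`, then `μ` is uniformly `(1-β)`-Hölder continuous in `Δ`.
The measure `μ` on the circle `𝕋 = ℝ/ℤ` is represented as a finite measure on `ℝ`
supported on `[0,1)`. -/
theorem stmt3 (μ : Measure ℝ) [IsFiniteMeasure μ]
    (hsupp : μ (Set.Ico (0:ℝ) 1)ᶜ = 0)
    (a b : ℝ) (ha : 0 ≤ a) (hb : b ≤ 1) (β : ℝ) (hβ0 : 0 ≤ β) (hβ1 : β ≤ 1)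
    (h : ∃ C : ℝ, 0 < C ∧ ∀ ε > 0, ∃ N : ℕ, ∀ n ≥ N, ∀ l ∈ Set.Ioo a b,
      (n : ℝ) ^ (-β) * ∫ x, fejer n (l - x) ∂μ ≤ C + ε) :
    ∃ C' : ℝ, ∀ c d : ℝ, c ≤ d → Set.Icc c d ⊆ Set.Ioo a b → d - c < 1 →
      (μ (Set.Icc c d)).toReal ≤ C' * (d - c) ^ ((1:ℝ) - β) := by
  obtain ⟨C, hC, hbound⟩ := h
  obtain ⟨N, hN⟩ := hbound 1 one_pos
  by_cases hβ : β = 1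
  · refine ⟨(μ Set.univ).toReal, ?_⟩
    intro c d hcd hsub hlt
    rw [hβ, sub_self, Real.rpow_zero, mul_one]
    exact ENNReal.toReal_mono (measure_ne_top μ _) (measure_mono (Set.subset_univ _))
  have hβlt : β < 1 := lt_of_le_of_ne hβ1 hβ
  have hπ : (0:ℝ) < π := Real.pi_pos
  -- key estimate
  have key : ∀ n : ℕ, max N 1 ≤ n → ∀ c d : ℝ, c ≤ d → Set.Icc c d ⊆ Set.Ioo a b →
      d - c ≤ 1/n → (μ (Set.Icc c d)).toReal ≤ (π^2*(C+1)/4) * (n:ℝ)^(β-(1:ℝ)) := by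
    intro n hn c d hcd hsub hsmall
    have hn1 : 1 ≤ n := le_trans (le_max_right _ _) hn
    have hnN : N ≤ n := le_trans (le_max_left _ _) hn
    have hnR : (1:ℝ) ≤ n := by exact_mod_cast hn1
    have hn0 : (0:ℝ) < n := by linarith
    set l := (c+d)/2 with hl_def
    have hl : l ∈ Set.Ioo a b := hsub ⟨by rw [hl_def]; linarith, by rw [hl_def]; linarith⟩
    have hmeas : Measurable (fun x => fejer n (l - x)) :=
      (fejer_measurable n).comp (measurable_const.sub measurable_id)
    have hint : Integrable (fun x => fejer n (l - x)) μ := by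
      apply Integrable.mono' (integrable_const (n:ℝ)) hmeas.aestronglyMeasurable
      filter_upwards with x
      rw [Real.norm_eq_abs, abs_of_nonneg (fejer_nonneg _ _)]
      exact fejer_le _ _
    have hptwise : ∀ x ∈ Set.Icc c d, 4*(n:ℝ)/π^2 ≤ fejer n (l - x) := by
      intro x hx
      obtain ⟨hx1, hx2⟩ := hx
      apply fejer_lower hn1
      have e : (1:ℝ)/(2*(n:ℝ)) = (1/(n:ℝ))/2 := by rw [div_div, mul_comm 2 (n:ℝ)]
      rw [abs_le]
      constructor
      · rw [hl_def]; rw [e]; linarith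
      · rw [hl_def]; rw [e]; linarith
    have hmono_int : (4*(n:ℝ)/π^2) * (μ (Set.Icc c d)).toReal ≤ ∫ x, fejer n (l - x) ∂μ := by
      calc (4*(n:ℝ)/π^2) * (μ (Set.Icc c d)).toReal
          ≤ ∫ x in Set.Icc c d, fejer n (l - x) ∂μ :=
            by have := setIntegral_ge_of_const_le measurableSet_Icc (measure_ne_top μ _) hptwise
                hint.integrableOn; rw [smul_eq_mul, mul_comm] at this; exact this
        _ ≤ ∫ x, fejer n (l - x) ∂μ :=
            setIntegral_le_integral hint (Eventually.of_forall fun x => fejer_nonneg n (l - x))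
    have hG : ∫ x, fejer n (l - x) ∂μ ≤ (C+1) * (n:ℝ)^β := by
      have h1 := hN n hnN l hl
      have hpow : (0:ℝ) < (n:ℝ)^β := Real.rpow_pos_of_pos hn0 β
      have hmul : (n:ℝ)^β * (n:ℝ)^(-β) = 1 := by
        rw [← Real.rpow_add hn0]; simp
      calc ∫ x, fejer n (l - x) ∂μ
          = (n:ℝ)^β * ((n:ℝ)^(-β) * ∫ x, fejer n (l - x) ∂μ) := by
            rw [← mul_assoc, hmul, one_mul]
        _ ≤ (n:ℝ)^β * (C+1) := mul_le_mul_of_nonneg_left h1 hpow.le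
        _ = (C+1) * (n:ℝ)^β := mul_comm _ _
    have hA : (0:ℝ) < 4*(n:ℝ)/π^2 := by positivity
    have h3 : (μ (Set.Icc c d)).toReal ≤ ((C+1)*(n:ℝ)^β) / (4*(n:ℝ)/π^2) := by
      rw [le_div_iff₀ hA, mul_comm]
      exact le_trans hmono_int hG
    refine h3.trans (le_of_eq ?_)
    have hrw : (n:ℝ)^(β-(1:ℝ)) = (n:ℝ)^β / (n:ℝ) := by
      rw [Real.rpow_sub hn0, Real.rpow_one]
    rw [hrw]
    have hn0' : (n:ℝ) ≠ 0 := ne_of_gt hn0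
    have hπ0 : (π:ℝ) ≠ 0 := ne_of_gt hπ
    field_simp
  have hCpos : (0:ℝ) ≤ π^2*(C+1)/4 := by positivity
  refine ⟨π^2*(C+1)/2 + ((N:ℝ)+1) * (μ Set.univ).toReal, ?_⟩
  intro c d hcd hsub hlt
  have hRHS0 : 0 ≤ (d-c) ^ ((1:ℝ)-β) := Real.rpow_nonneg (by linarith) _
  have hterm2 : 0 ≤ ((N:ℝ)+1) * (μ Set.univ).toReal := by positivity
  rcases eq_or_lt_of_le hcd with rfl | hcd'
  · -- degenerate case d = c
    have hkey : ∀ n : ℕ, max N 1 ≤ n →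
        (μ (Set.Icc c c)).toReal ≤ (π^2*(C+1)/4) * (n:ℝ)^(β-(1:ℝ)) := by
      intro n hn
      exact key n hn c c le_rfl hsub (by rw [sub_self]; positivity)
    have htend : Tendsto (fun n : ℕ => (π^2*(C+1)/4) * (n:ℝ)^(β-(1:ℝ))) atTop (𝓝 0) := by
      have h0 : Tendsto (fun x : ℝ => x^(β-(1:ℝ))) atTop (𝓝 0) := by
        have := tendsto_rpow_neg_atTop (y := 1-β) (by linarith)
        simpa [neg_sub] using this
      have h1 := (h0.comp (tendsto_natCast_atTop_atTop (R := ℝ))).const_mul (π^2*(C+1)/4)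
      simpa using h1
    have hle0 : (μ (Set.Icc c c)).toReal ≤ 0 := by
      apply ge_of_tendsto htend
      filter_upwards [eventually_ge_atTop (max N 1)] with n hn using hkey n hn
    have hz : (μ (Set.Icc c c)).toReal = 0 := le_antisymm hle0 ENNReal.toReal_nonneg
    rw [hz, sub_self, Real.zero_rpow (by linarith : (1:ℝ)-β ≠ 0), mul_zero]
  · -- main case c < d
    have hdc : 0 < d - c := by linarith
    set n := Nat.floor (1/(d-c)) with hn_def
    have h1dc : 1 < 1/(d-c) := by rw [lt_div_iff₀ hdc]; linarith
    have hn1 : 1 ≤ n := Nat.le_floor (by push_cast; linarith)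
    have hnR : (1:ℝ) ≤ n := by exact_mod_cast hn1
    have hn0 : (0:ℝ) < n := by linarith
    have hfl : (n:ℝ) ≤ 1/(d-c) := Nat.floor_le (by positivity)
    have hfl2 : 1/(d-c) < (n:ℝ) + 1 := Nat.lt_floor_add_one _
    have hsmall : d - c ≤ 1/(n:ℝ) := by
      rw [le_div_iff₀ hn0]
      have := (le_div_iff₀ hdc).mp hfl
      linarith
    by_cases hNn : N ≤ n
    · have h1 := key n (max_le hNn hn1) c d hcd hsub hsmall
      have hhalf : 1/(2*(d-c)) ≤ (n:ℝ) := by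
        have e : (1:ℝ)/(2*(d-c)) = (1/(d-c))/2 := by rw [div_div, mul_comm 2 (d-c)]
        rw [e]; linarith
      have h1β : (0:ℝ) ≤ 1 - β := by linarith
      have hpos : (0:ℝ) < 1/(2*(d-c)) := by positivity
      have hexp : (n:ℝ)^(β-(1:ℝ)) ≤ 2 * (d-c)^((1:ℝ)-β) := by
        have hmono : (1/(2*(d-c)))^((1:ℝ)-β) ≤ (n:ℝ)^((1:ℝ)-β) :=
          Real.rpow_le_rpow hpos.le hhalf h1β
        have hinv : (n:ℝ)^(β-(1:ℝ)) = ((n:ℝ)^((1:ℝ)-β))⁻¹ := by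
          rw [← Real.rpow_neg hn0.le, neg_sub]
        rw [hinv]
        have h2 : ((n:ℝ)^((1:ℝ)-β))⁻¹ ≤ ((1/(2*(d-c)))^((1:ℝ)-β))⁻¹ :=
          inv_anti₀ (Real.rpow_pos_of_pos hpos _) hmono
        refine h2.trans ?_
        have h3 : ((1:ℝ)/(2*(d-c)))^((1:ℝ)-β) = ((2*(d-c))^((1:ℝ)-β))⁻¹ := by
          rw [one_div, Real.inv_rpow (by positivity)]
        rw [h3, inv_inv, Real.mul_rpow (by norm_num) hdc.le]
        have h4 : (2:ℝ)^((1:ℝ)-β) ≤ 2 := by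
          nth_rewrite 2 [show (2:ℝ) = 2^(1:ℝ) by rw [Real.rpow_one]]
          exact Real.rpow_le_rpow_of_exponent_le (by norm_num) (by linarith)
        exact mul_le_mul_of_nonneg_right h4 (Real.rpow_nonneg hdc.le _) |>.trans_eq rfl
      calc (μ (Set.Icc c d)).toReal ≤ (π^2*(C+1)/4) * (n:ℝ)^(β-(1:ℝ)) := h1
        _ ≤ (π^2*(C+1)/4) * (2 * (d-c)^((1:ℝ)-β)) := mul_le_mul_of_nonneg_left hexp hCpos
        _ = (π^2*(C+1)/2) * (d-c)^((1:ℝ)-β) := by ring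
        _ ≤ (π^2*(C+1)/2 + ((N:ℝ)+1) * (μ Set.univ).toReal) * (d-c)^((1:ℝ)-β) := by
            apply mul_le_mul_of_nonneg_right _ hRHS0
            linarith
    · push_neg at hNn
      have hN1 : (1:ℝ) ≤ (N:ℝ) := by exact_mod_cast Nat.one_le_iff_ne_zero.mpr (by omega)
      have hNpos : (0:ℝ) < N := by linarith
      have hnN' : (n:ℝ) + 1 ≤ (N:ℝ) := by exact_mod_cast hNn
      have hNd : 1/(d-c) < (N:ℝ) := lt_of_lt_of_le hfl2 hnN'
      have hdN : 1/(N:ℝ) ≤ d - c := by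
        rw [div_le_iff₀ hNpos]
        have := (div_lt_iff₀ hdc).mp hNd
        linarith
      have hpow : 1/(N:ℝ) ≤ (d-c)^((1:ℝ)-β) := by
        have h5 : (d-c)^(1:ℝ) ≤ (d-c)^((1:ℝ)-β) :=
          Real.rpow_le_rpow_of_exponent_ge hdc (by linarith) (by linarith)
        rw [Real.rpow_one] at h5
        linarith
      have hμu : (μ (Set.Icc c d)).toReal ≤ (μ Set.univ).toReal :=
        ENNReal.toReal_mono (measure_ne_top μ _) (measure_mono (Set.subset_univ _))
      have hμ0 : (0:ℝ) ≤ (μ Set.univ).toReal := ENNReal.toReal_nonneg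
      calc (μ (Set.Icc c d)).toReal ≤ (μ Set.univ).toReal := hμu
        _ = ((N:ℝ) * (μ Set.univ).toReal) * (1/(N:ℝ)) := by
            have hN0 : (N:ℝ) ≠ 0 := ne_of_gt hNpos
            field_simp
        _ ≤ ((N:ℝ) * (μ Set.univ).toReal) * ((d-c)^((1:ℝ)-β)) := by
            apply mul_le_mul_of_nonneg_left hpow (by positivity)
        _ ≤ (π^2*(C+1)/2 + ((N:ℝ)+1) * (μ Set.univ).toReal) * (d-c)^((1:ℝ)-β) := by
            apply mul_le_mul_of_nonneg_right _ hRHS0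
            nlinarith [hμ0, sq_nonneg π, hC]
end

section
/- Let μ be a finite positive Borel measure on ℝ and G_T(λ) := ∫ K_T(λ-x) dμ(x) with K_T(y) = (1/T)(sin(πTy)/(πy))². If μ is uniformly (1-β)-Hölder continuous in an open interval Δ (0 ≤ β ≤ 1), then for each λ ∈ Δ, limsup_{T→∞} T^{-β} G_T(λ) < ∞. -/
open MeasureTheory Filter
open scoped Real

/-- The Fejér kernel on `ℝ`: `K_T(y) = (1/T)(sin(πTy)/(πy))²`, with value `T`
at `y = 0` (the continuous extension). -/
noncomputable def fejerR (T y : ℝ) : ℝ :=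
  if y = 0 then T else (1 / T) * (Real.sin (π * T * y) / (π * y)) ^ 2

lemma fejer_nonneg_s7 {T : ℝ} (hT : 0 < T) (y : ℝ) : 0 ≤ fejerR T y := by
  unfold fejerR; split
  · exact hT.le
  · positivity

lemma fejer_le_T {T : ℝ} (hT : 0 < T) (y : ℝ) : fejerR T y ≤ T := by
  unfold fejerR; split
  · exact le_rfl
  · rename_i hy
    rw [div_pow]
    have h1 : Real.sin (π * T * y) ^ 2 ≤ (π * T * y) ^ 2 := Real.sin_sq_le_sq
    have h3 : (π * T * y) ^ 2 / (π * y) ^ 2 = T ^ 2 := by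
      field_simp
    calc 1 / T * (Real.sin (π * T * y) ^ 2 / (π * y) ^ 2)
        ≤ 1 / T * ((π * T * y) ^ 2 / (π * y) ^ 2) := by gcongr
      _ = T := by rw [h3]; field_simp [pow_two]

lemma fejer_le_inv {T r : ℝ} (hT : 0 < T) (hr : 0 < r) {y : ℝ} (hy : r ≤ |y|) :
    fejerR T y ≤ 1 / (T * π ^ 2 * r ^ 2) := by
  have hy0 : y ≠ 0 := by
    intro h; rw [h] at hy; simp at hy; linarith
  unfold fejerR
  rw [if_neg hy0, div_pow]
  have h1 : Real.sin (π * T * y) ^ 2 ≤ 1 := Real.sin_sq_le_one _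
  have h2 : r ^ 2 ≤ y ^ 2 := by
    rw [← sq_abs y]; exact pow_le_pow_left₀ hr.le hy 2
  calc 1 / T * (Real.sin (π * T * y) ^ 2 / (π * y) ^ 2)
      ≤ 1 / T * (1 / (π * y) ^ 2) := by gcongr
    _ = 1 / (T * π ^ 2 * y ^ 2) := by rw [mul_pow]; field_simp
    _ ≤ 1 / (T * π ^ 2 * r ^ 2) := by gcongr

lemma fejer_meas (T l : ℝ) : Measurable (fun x => fejerR T (l - x)) := by
  have : Measurable (fejerR T) := by
    unfold fejerR
    exact Measurable.ite measurableSet_eq measurable_const (by fun_prop)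
  exact this.comp (measurable_const.sub measurable_id)

set_option maxHeartbeats 1000000 in
lemma main_bound (μ : Measure ℝ) [IsFiniteMeasure μ] (β C δ l T : ℝ)
    (hβ0 : 0 ≤ β) (hβ1 : β ≤ 1) (hC : 0 ≤ C) (hδ : 0 < δ) (hδ2 : δ < 1/2)
    (hH : ∀ r : ℝ, 0 < r → r ≤ δ →
      (μ (Set.Icc (l - r) (l + r))).toReal ≤ C * (2*r) ^ ((1:ℝ) - β))
    (hT1 : 1 ≤ T) (hT2 : 2/δ ≤ T) :
    T ^ (-β) * ∫ x, fejerR T (l - x) ∂μ ≤ 10*C + 4*(μ Set.univ).toReal/δ^2 := by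
  have hT0 : (0:ℝ) < T := lt_of_lt_of_le one_pos hT1
  have hδT : 2 ≤ δ * T := by
    rw [div_le_iff₀ hδ] at hT2; linarith [hT2]
  set N := Nat.log 2 ⌊δ*T⌋₊ with hN
  have hfl1 : 1 ≤ ⌊δ*T⌋₊ := by rw [Nat.one_le_floor_iff]; linarith
  have h2N : (2:ℝ)^N ≤ δ*T := by
    calc ((2:ℝ)^N) = ((2^N : ℕ) : ℝ) := by push_cast; ring
      _ ≤ (⌊δ*T⌋₊ : ℝ) := by
          exact_mod_cast Nat.pow_log_le_self 2 (by omega)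
      _ ≤ δ*T := Nat.floor_le (by positivity)
  have h2N' : δ*T < 2^(N+1) := by
    calc δ*T < (⌊δ*T⌋₊ : ℝ) + 1 := Nat.lt_floor_add_one _
      _ ≤ ((2^(N+1) : ℕ) : ℝ) := by
          exact_mod_cast Nat.lt_pow_succ_log_self (by norm_num) ⌊δ*T⌋₊
      _ = 2^(N+1) := by push_cast; ring
  have h2Nhalf : δ/2 < (2:ℝ)^N / T := by
    rw [lt_div_iff₀ hT0]
    have : (2:ℝ)^(N+1) = 2 * 2^N := by ring
    nlinarith [h2N']
  -- the pieces
  set ann : ℕ → Set ℝ := fun n => Metric.ball l ((2:ℝ)^(n+1)/T) \ Metric.ball l ((2:ℝ)^n/T)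
    with hann
  set tailS : Set ℝ := (Metric.ball l ((2:ℝ)^N/T))ᶜ with htailS
  set g : ℝ → ℝ := fun x =>
      Set.indicator (Metric.ball l (1/T)) (fun _ => T) x
      + (∑ n ∈ Finset.range N, Set.indicator (ann n) (fun _ => T/(π^2*4^n)) x)
      + Set.indicator tailS (fun _ => 4/(T*π^2*δ^2)) x with hg
  have t1nn : ∀ x, 0 ≤ Set.indicator (Metric.ball l (1/T)) (fun _ => T) x :=
    fun x => Set.indicator_nonneg (fun _ _ => hT0.le) x
  have t2nn : ∀ x, 0 ≤ ∑ n ∈ Finset.range N, Set.indicator (ann n) (fun _ => T/(π^2*4^n)) x :=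
    fun x => Finset.sum_nonneg fun n _ => Set.indicator_nonneg (fun _ _ => by positivity) x
  have t3nn : ∀ x, 0 ≤ Set.indicator tailS (fun _ => 4/(T*π^2*δ^2)) x :=
    fun x => Set.indicator_nonneg (fun _ _ => by positivity) x
  have hptw : ∀ x, fejerR T (l - x) ≤ g x := by
    intro x
    have hdist : dist x l = |l - x| := by rw [Real.dist_eq, abs_sub_comm]
    rcases lt_or_ge (|l - x|) (1/T) with hc | hc
    · have hx : x ∈ Metric.ball l (1/T) := by rwa [Metric.mem_ball, hdist]
      have : Set.indicator (Metric.ball l (1/T)) (fun _ => T) x = T := Set.indicator_of_mem hx _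
      have hf := fejer_le_T hT0 (l - x)
      simp only [hg]
      rw [this] at *
      linarith [t2nn x, t3nn x]
    · rcases le_or_gt ((2:ℝ)^N/T) (|l - x|) with hc2 | hc2
      · -- tail case
        have hx : x ∈ tailS := by
          simp only [htailS, Set.mem_compl_iff, Metric.mem_ball, hdist, not_lt]
          exact hc2
        have h3 : Set.indicator tailS (fun _ => 4/(T*π^2*δ^2)) x = 4/(T*π^2*δ^2) :=
          Set.indicator_of_mem hx _
        have hrpos : (0:ℝ) < (2:ℝ)^N/T := by positivity
        have hf := fejer_le_inv hT0 hrpos hc2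
        have hkey : 1 / (T * π ^ 2 * ((2:ℝ)^N/T) ^ 2) ≤ 4/(T*π^2*δ^2) := by
          rw [div_le_div_iff₀ (by positivity) (by positivity)]
          have h1 : δ^2 ≤ 4 * ((2:ℝ)^N/T)^2 := by nlinarith [h2Nhalf, hδ.le]
          nlinarith [mul_le_mul_of_nonneg_left h1 (show (0:ℝ) ≤ T*π^2 by positivity)]
        simp only [hg]
        rw [h3]
        linarith [t1nn x, t2nn x, hf.trans hkey]
      · -- annulus case
        set r := |l - x| with hr
        have hr0 : (0:ℝ) < r := lt_of_lt_of_le (by positivity) hc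
        have hTr1 : 1 ≤ T * r := by
          rw [div_le_iff₀ hT0] at hc; linarith [hc]
        set m := Nat.log 2 ⌊T*r⌋₊ with hm
        have hflm : 1 ≤ ⌊T*r⌋₊ := by rw [Nat.one_le_floor_iff]; linarith
        have h2m : (2:ℝ)^m ≤ T*r := by
          calc ((2:ℝ)^m) = ((2^m : ℕ) : ℝ) := by push_cast; ring
            _ ≤ (⌊T*r⌋₊ : ℝ) := by exact_mod_cast Nat.pow_log_le_self 2 (by omega)
            _ ≤ T*r := Nat.floor_le (by positivity)
        have h2m' : T*r < 2^(m+1) := by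
          calc T*r < (⌊T*r⌋₊ : ℝ) + 1 := Nat.lt_floor_add_one _
            _ ≤ ((2^(m+1) : ℕ) : ℝ) := by
                exact_mod_cast Nat.lt_pow_succ_log_self (by norm_num) ⌊T*r⌋₊
            _ = 2^(m+1) := by push_cast; ring
        have hmN : m < N := by
          have hfloorlt : ⌊T*r⌋₊ < 2^N := by
            rw [Nat.floor_lt (by positivity)]
            push_cast
            calc T*r = r*T := by ring
              _ < ((2:ℝ)^N/T)*T := by gcongr
              _ = (2:ℝ)^N := by field_simp
          have : (2:ℕ)^m ≤ ⌊T*r⌋₊ := Nat.pow_log_le_self 2 (by omega)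
          have : (2:ℕ)^m < 2^N := lt_of_le_of_lt this hfloorlt
          exact (Nat.pow_lt_pow_iff_right (by norm_num)).mp this
        have hxann : x ∈ ann m := by
          simp only [hann, Set.mem_diff, Metric.mem_ball, hdist, not_lt]
          constructor
          · rw [lt_div_iff₀ hT0]; linarith [h2m']
          · rw [div_le_iff₀ hT0]; linarith [h2m]
        have hrge : (2:ℝ)^m/T ≤ |l - x| := by
          rw [div_le_iff₀ hT0]; linarith [h2m]
        have hf := fejer_le_inv hT0 (by positivity : (0:ℝ) < (2:ℝ)^m/T) hrge
        have hkey : 1 / (T * π ^ 2 * ((2:ℝ)^m/T) ^ 2) = T/(π^2*4^m) := by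
          have h4 : ((2:ℝ)^m)^2 = 4^m := by
            rw [← pow_mul, mul_comm m 2, pow_mul]; norm_num
          field_simp
          rw [← h4]
        have hsum : T/(π^2*4^m)
            ≤ ∑ n ∈ Finset.range N, Set.indicator (ann n) (fun _ => T/(π^2*4^n)) x := by
          have := Finset.single_le_sum
            (f := fun n => Set.indicator (ann n) (fun _ => T/(π^2*4^n)) x)
            (fun n _ => Set.indicator_nonneg (fun _ _ => by positivity) x)
            (Finset.mem_range.mpr hmN)
          simpa [Set.indicator_of_mem hxann] using this
        simp only [hg]
        rw [hkey] at hf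
        linarith [t1nn x, t3nn x, hf.trans hsum]
  have int1 : Integrable (fun x => Set.indicator (Metric.ball l (1/T)) (fun _ => T) x) μ := by
    rw [integrable_indicator_iff Metric.isOpen_ball.measurableSet]
    exact integrableOn_const (measure_ne_top μ _)
  have annmeas : ∀ n : ℕ, MeasurableSet (ann n) := fun n =>
    Metric.isOpen_ball.measurableSet.diff Metric.isOpen_ball.measurableSet
  have intann : ∀ n : ℕ, Integrable (fun x => Set.indicator (ann n) (fun _ => T/(π^2*4^n)) x) μ := by
    intro n
    rw [integrable_indicator_iff (annmeas n)]
    exact integrableOn_const (measure_ne_top μ _)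
  have intsum : Integrable (fun x => ∑ n ∈ Finset.range N,
      Set.indicator (ann n) (fun _ => T/(π^2*4^n)) x) μ :=
    integrable_finset_sum _ (fun n _ => intann n)
  have int3 : Integrable (fun x => Set.indicator tailS (fun _ => 4/(T*π^2*δ^2)) x) μ := by
    rw [integrable_indicator_iff Metric.isOpen_ball.measurableSet.compl]
    exact integrableOn_const (measure_ne_top μ _)
  have hint : Integrable g μ := by
    simp only [hg]
    exact (int1.add intsum).add int3
  have hle1 : ∫ x, fejerR T (l - x) ∂μ ≤ ∫ x, g x ∂μ :=
    integral_mono_of_nonneg (Filter.Eventually.of_forall fun x => fejer_nonneg_s7 hT0 _)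
      hint (Filter.Eventually.of_forall hptw)
  have hgval : ∫ x, g x ∂μ
      = (μ (Metric.ball l (1/T))).toReal * T
      + (∑ n ∈ Finset.range N, (μ (ann n)).toReal * (T/(π^2*4^n)))
      + (μ tailS).toReal * (4/(T*π^2*δ^2)) := by
    have int12 : Integrable (fun x => Set.indicator (Metric.ball l (1/T)) (fun _ => T) x
        + ∑ n ∈ Finset.range N, Set.indicator (ann n) (fun _ => T/(π^2*4^n)) x) μ := by
      exact int1.add intsum
    simp only [hg]
    rw [integral_add int12 int3, integral_add int1 intsum,
      integral_finset_sum _ (fun n _ => intann n)]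
    rw [integral_indicator_const _ Metric.isOpen_ball.measurableSet,
      integral_indicator_const _ Metric.isOpen_ball.measurableSet.compl]
    have hs : ∀ n ∈ Finset.range N,
        ∫ a, Set.indicator (ann n) (fun _ => T/(π^2*4^n)) a ∂μ
          = (μ (ann n)).toReal * (T/(π^2*4^n)) := fun n _ => by
      rw [integral_indicator_const _ (annmeas n), smul_eq_mul, measureReal_def]
    rw [Finset.sum_congr rfl hs, smul_eq_mul, smul_eq_mul, measureReal_def, measureReal_def]
  -- measure bounds
  have hball_sub : ∀ r : ℝ, Metric.ball l r ⊆ Set.Icc (l - r) (l + r) := by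
    intro r
    rw [Real.ball_eq_Ioo]
    exact Set.Ioo_subset_Icc_self
  have hcore : (μ (Metric.ball l (1/T))).toReal ≤ C * (2*(1/T)) ^ ((1:ℝ) - β) := by
    have h1Tδ : 1/T ≤ δ := by
      rw [div_le_iff₀ hT0]; nlinarith
    calc (μ (Metric.ball l (1/T))).toReal
        ≤ (μ (Set.Icc (l - 1/T) (l + 1/T))).toReal :=
          ENNReal.toReal_mono (measure_ne_top μ _) (measure_mono (hball_sub _))
      _ ≤ C * (2*(1/T)) ^ ((1:ℝ) - β) := hH (1/T) (by positivity) h1Tδ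
  have hannb : ∀ n ∈ Finset.range N,
      (μ (ann n)).toReal ≤ C * (2*((2:ℝ)^(n+1)/T)) ^ ((1:ℝ) - β) := by
    intro n hn
    rw [Finset.mem_range] at hn
    have hrδ : (2:ℝ)^(n+1)/T ≤ δ := by
      rw [div_le_iff₀ hT0]
      calc (2:ℝ)^(n+1) ≤ 2^N := by
            apply pow_le_pow_right₀ one_le_two; omega
        _ ≤ δ * T := h2N
        _ = δ * T := rfl
    calc (μ (ann n)).toReal
        ≤ (μ (Set.Icc (l - 2^(n+1)/T) (l + 2^(n+1)/T))).toReal := by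
          apply ENNReal.toReal_mono (measure_ne_top μ _)
          apply measure_mono
          exact (Set.diff_subset.trans (hball_sub _))
      _ ≤ C * (2*((2:ℝ)^(n+1)/T)) ^ ((1:ℝ) - β) := hH _ (by positivity) hrδ
  have htailb : (μ tailS).toReal ≤ (μ Set.univ).toReal :=
    ENNReal.toReal_mono (measure_ne_top μ _) (measure_mono (Set.subset_univ _))
  -- key rpow identity
  have hKpow : T^(-β) * T * (T^((1:ℝ)-β))⁻¹ = 1 := by
    have h1 : T^(-β) * T = T^((1:ℝ)-β) := by
      nth_rewrite 2 [← Real.rpow_one T]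
      rw [← Real.rpow_add hT0]
      congr 1; ring
    rw [h1, mul_inv_cancel₀ (ne_of_gt (Real.rpow_pos_of_pos hT0 _))]
  have hAnn : (0:ℝ) ≤ T^(-β) := Real.rpow_nonneg hT0.le _
  have hπ1 : (1:ℝ) ≤ π^2 := by nlinarith [Real.pi_gt_three]
  -- term 1 bound
  have b1 : T^(-β) * ((μ (Metric.ball l (1/T))).toReal * T) ≤ 2*C := by
    have h2r : (2:ℝ)*(1/T) = 2/T := by ring
    calc T^(-β) * ((μ (Metric.ball l (1/T))).toReal * T)
        ≤ T^(-β) * ((C * (2*(1/T))^((1:ℝ)-β)) * T) := by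
          apply mul_le_mul_of_nonneg_left _ hAnn
          exact mul_le_mul_of_nonneg_right hcore hT0.le
      _ = (2:ℝ)^((1:ℝ)-β) * C * (T^(-β) * T * (T^((1:ℝ)-β))⁻¹) := by
          rw [h2r, Real.div_rpow (by norm_num) hT0.le]; ring
      _ = (2:ℝ)^((1:ℝ)-β) * C := by rw [hKpow, mul_one]
      _ ≤ 2 * C := by
          apply mul_le_mul_of_nonneg_right _ hC
          calc (2:ℝ)^((1:ℝ)-β) ≤ (2:ℝ)^(1:ℝ) :=
                Real.rpow_le_rpow_of_exponent_le one_le_two (by linarith)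
            _ = 2 := Real.rpow_one 2
  -- per-annulus bound
  have b2 : ∀ n ∈ Finset.range N,
      T^(-β) * ((μ (ann n)).toReal * (T/(π^2*4^n))) ≤ 4*C*((1:ℝ)/2)^n := by
    intro n hn
    have h2r : 2*((2:ℝ)^(n+1)/T) = 2^(n+2)/T := by rw [pow_succ]; ring
    have hexp : ((2:ℝ)^(n+2))^((1:ℝ)-β) ≤ 2^(n+2) := by
      calc ((2:ℝ)^(n+2))^((1:ℝ)-β) ≤ ((2:ℝ)^(n+2))^(1:ℝ) :=
            Real.rpow_le_rpow_of_exponent_le (one_le_pow₀ one_le_two) (by linarith)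
        _ = 2^(n+2) := Real.rpow_one _
    have key : (2:ℝ)^(n+2)/(4:ℝ)^n = 4*((1:ℝ)/2)^n := by
      rw [show ((1:ℝ)/2)^n = 1/2^n by rw [div_pow, one_pow]]
      rw [show ((4:ℝ))^n = 2^n*2^n by rw [show (4:ℝ)=2*2 by norm_num, mul_pow]]
      rw [show ((2:ℝ))^(n+2) = 2^n*4 by rw [pow_add]; norm_num]
      have h2n0 : (0:ℝ) < 2^n := by positivity
      field_simp
    calc T^(-β) * ((μ (ann n)).toReal * (T/(π^2*4^n)))
        ≤ T^(-β) * ((C * (2*((2:ℝ)^(n+1)/T))^((1:ℝ)-β)) * (T/(π^2*4^n))) := by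
          apply mul_le_mul_of_nonneg_left _ hAnn
          exact mul_le_mul_of_nonneg_right (hannb n hn) (by positivity)
      _ = ((2:ℝ)^(n+2))^((1:ℝ)-β) * C /(π^2*4^n) * (T^(-β) * T * (T^((1:ℝ)-β))⁻¹) := by
          rw [h2r, Real.div_rpow (by positivity) hT0.le]; ring
      _ = ((2:ℝ)^(n+2))^((1:ℝ)-β) * C /(π^2*4^n) := by rw [hKpow, mul_one]
      _ ≤ (2:ℝ)^(n+2) * C /(π^2*4^n) := by gcongr
      _ ≤ (2:ℝ)^(n+2) * C /(4^n) := by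
          apply div_le_div_of_nonneg_left (by positivity) (by positivity)
          nlinarith [pow_pos (show (0:ℝ) < 4 by norm_num) n]
      _ = 4*C*((1:ℝ)/2)^n := by rw [mul_comm ((2:ℝ)^(n+2)) C, mul_div_assoc, key]; ring
  have hgeo : ∑ n ∈ Finset.range N, ((1:ℝ)/2)^n ≤ 2 := by
    have hsummable : Summable (fun n : ℕ => ((1:ℝ)/2)^n) :=
      summable_geometric_of_lt_one (by norm_num) (by norm_num)
    have := Summable.sum_le_tsum (Finset.range N) (fun n _ => by positivity) hsummable
    rwa [tsum_geometric_of_lt_one (by norm_num) (by norm_num),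
      show ((1:ℝ)-1/2)⁻¹ = 2 by norm_num] at this
  have b2sum : T^(-β) * (∑ n ∈ Finset.range N, (μ (ann n)).toReal * (T/(π^2*4^n))) ≤ 8*C := by
    rw [Finset.mul_sum]
    calc ∑ n ∈ Finset.range N, T^(-β) * ((μ (ann n)).toReal * (T/(π^2*4^n)))
        ≤ ∑ n ∈ Finset.range N, 4*C*((1:ℝ)/2)^n := Finset.sum_le_sum b2
      _ = 4*C * ∑ n ∈ Finset.range N, ((1:ℝ)/2)^n := by rw [Finset.mul_sum]
      _ ≤ 4*C*2 := by
          apply mul_le_mul_of_nonneg_left hgeo (by positivity)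
      _ = 8*C := by ring
  -- tail bound
  have b3 : T^(-β) * ((μ tailS).toReal * (4/(T*π^2*δ^2))) ≤ 4*(μ Set.univ).toReal/δ^2 := by
    have hTβ1 : T^(-β) ≤ 1 := Real.rpow_le_one_of_one_le_of_nonpos hT1 (by linarith)
    have hd : 4/(T*π^2*δ^2) ≤ 4/δ^2 := by
      apply div_le_div_of_nonneg_left (by norm_num) (by positivity)
      have h1Tπ : 1 ≤ T*π^2 := by nlinarith
      nlinarith [mul_le_mul_of_nonneg_right h1Tπ (sq_nonneg δ)]
    calc T^(-β) * ((μ tailS).toReal * (4/(T*π^2*δ^2)))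
        ≤ 1 * ((μ Set.univ).toReal * (4/δ^2)) := by
          apply mul_le_mul hTβ1
            (mul_le_mul htailb hd (by positivity) ENNReal.toReal_nonneg)
            (by positivity) one_pos.le
      _ = 4*(μ Set.univ).toReal/δ^2 := by ring
  calc T ^ (-β) * ∫ x, fejerR T (l - x) ∂μ
      ≤ T ^ (-β) * ∫ x, g x ∂μ := mul_le_mul_of_nonneg_left hle1 hAnn
    _ = T^(-β) * ((μ (Metric.ball l (1/T))).toReal * T)
        + T^(-β) * (∑ n ∈ Finset.range N, (μ (ann n)).toReal * (T/(π^2*4^n)))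
        + T^(-β) * ((μ tailS).toReal * (4/(T*π^2*δ^2))) := by rw [hgval]; ring
    _ ≤ 2*C + 8*C + 4*(μ Set.univ).toReal/δ^2 := by
        exact add_le_add (add_le_add b1 b2sum) b3
    _ ≤ 10*C + 4*(μ Set.univ).toReal/δ^2 := by linarith



/-- If `μ` is uniformly `(1-β)`-Hölder continuous in the open interval `(a,b)`,
then for each `λ ∈ (a,b)`, `limsup_{T→∞} T^{-β} G_T(λ) < ∞`. -/
theorem stmt7 (μ : Measure ℝ) [IsFiniteMeasure μ]
    (a b β : ℝ) (hβ0 : 0 ≤ β) (hβ1 : β ≤ 1)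
    (h : ∃ C : ℝ, ∀ c d : ℝ, c ≤ d → Set.Icc c d ⊆ Set.Ioo a b → d - c < 1 →
      (μ (Set.Icc c d)).toReal ≤ C * (d - c) ^ ((1:ℝ) - β)) :
    ∀ l ∈ Set.Ioo a b, ∃ C' : ℝ,
      ∀ᶠ T in Filter.atTop, T ^ (-β) * ∫ x, fejerR T (l - x) ∂μ ≤ C' := by
  obtain ⟨C, hC⟩ := h
  intro l hl
  obtain ⟨hal, hlb⟩ := hl
  set δ : ℝ := min (min (l-a) (b-l)) (1/2) / 2 with hδdef
  have hδ0 : 0 < δ := by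
    apply div_pos _ (by norm_num)
    apply lt_min (lt_min (by linarith) (by linarith)) (by norm_num)
  have hδhalf : δ < 1/2 := by
    have : min (min (l-a) (b-l)) (1/2) ≤ 1/2 := min_le_right _ _
    rw [hδdef]; linarith
  have hH : ∀ r : ℝ, 0 < r → r ≤ δ →
      (μ (Set.Icc (l - r) (l + r))).toReal ≤ (max C 0) * (2*r) ^ ((1:ℝ) - β) := by
    intro r hr0 hrδ
    have hla : δ ≤ (l-a)/2 := by
      rw [hδdef]; gcongr; exact (min_le_left _ _).trans (min_le_left _ _)
    have hlb' : δ ≤ (b-l)/2 := by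
      rw [hδdef]; gcongr; exact (min_le_left _ _).trans (min_le_right _ _)
    have hsub : Set.Icc (l-r) (l+r) ⊆ Set.Ioo a b := by
      intro x hx
      obtain ⟨hx1, hx2⟩ := hx
      constructor <;> nlinarith
    have h1 := hC (l-r) (l+r) (by linarith) hsub (by linarith)
    have h2 : l + r - (l - r) = 2*r := by ring
    rw [h2] at h1
    calc (μ (Set.Icc (l - r) (l + r))).toReal ≤ C * (2*r) ^ ((1:ℝ) - β) := h1
      _ ≤ (max C 0) * (2*r) ^ ((1:ℝ) - β) := by
          apply mul_le_mul_of_nonneg_right (le_max_left _ _)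
          exact Real.rpow_nonneg (by linarith) _
  refine ⟨10*(max C 0) + 4*(μ Set.univ).toReal/δ^2, ?_⟩
  filter_upwards [Filter.eventually_ge_atTop (max 1 (2/δ))] with T hT
  exact main_bound μ β (max C 0) δ l T hβ0 hβ1 (le_max_right _ _) hδ0 hδhalf hH
    ((le_max_left _ _).trans hT) ((le_max_right _ _).trans hT)
end
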